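/- (Eigenvalue clipping is a Bures–Wasserstein contraction.) Fix 0 < β < ∞. For a d×d real symmetric positive semidefinite matrix Σ with spectral decomposition Σ = ∑_{i=1}^d λᵢ uᵢ uᵢᵀ, define clip^β Σ := ∑_{i=1}^d min(λᵢ, β) uᵢ uᵢᵀ. Then for all d×d real symmetric positive semidefinite matrices X and Y, W₂(clip^β X, clip^β Y) ≤ W₂(X, Y). -/

import Mathlib

open Matrix
open scoped Classical

/-- Symmetric PSD square root of a positive semidefinite matrix (junk value `0` otherwise). -/
noncomputable def msqrt {d : ℕ} (M : Matrix (Fin d) (Fin d) ℝ) : Matrix (Fin d) (Fin d) ℝ :=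
  if h : M.PosSemidef then
    (h.1.eigenvectorUnitary : Matrix (Fin d) (Fin d) ℝ) *
      Matrix.diagonal ((↑) ∘ Real.sqrt ∘ h.1.eigenvalues) *
      (star h.1.eigenvectorUnitary : Matrix (Fin d) (Fin d) ℝ)
  else 0

/-- PSD square root (replacement for the removed `Matrix.PosSemidef.sqrt`). -/
noncomputable def Matrix.PosSemidef.sqrt {d : ℕ} {M : Matrix (Fin d) (Fin d) ℝ}
    (h : M.PosSemidef) : Matrix (Fin d) (Fin d) ℝ :=
  (h.1.eigenvectorUnitary : Matrix (Fin d) (Fin d) ℝ) *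
    Matrix.diagonal ((↑) ∘ Real.sqrt ∘ h.1.eigenvalues) *
    (star h.1.eigenvectorUnitary : Matrix (Fin d) (Fin d) ℝ)

open scoped MatrixOrder in
lemma Matrix.PosSemidef.sqrt_eq_cfcSqrt {d : ℕ} {M : Matrix (Fin d) (Fin d) ℝ}
    (h : M.PosSemidef) : h.sqrt = CFC.sqrt M := by
  rw [CFC.sqrt_eq_cfc, cfc_nnreal_eq_real _ M h.nonneg, h.1.cfc_eq]
  simp only [IsHermitian.cfc, Matrix.PosSemidef.sqrt, Unitary.conjStarAlgAut_apply]
  congr 2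
  congr 1
  funext i
  simp [Real.coe_sqrt, Real.coe_toNNReal', max_eq_left (h.eigenvalues_nonneg i)]

open scoped MatrixOrder in
lemma Matrix.PosSemidef.posSemidef_sqrt {d : ℕ} {M : Matrix (Fin d) (Fin d) ℝ}
    (h : M.PosSemidef) : h.sqrt.PosSemidef := by
  rw [h.sqrt_eq_cfcSqrt]
  exact (CFC.sqrt_nonneg M).posSemidef

open scoped MatrixOrder in
lemma Matrix.PosSemidef.sqrt_mul_self {d : ℕ} {M : Matrix (Fin d) (Fin d) ℝ}
    (h : M.PosSemidef) : h.sqrt * h.sqrt = M := by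
  rw [h.sqrt_eq_cfcSqrt]
  exact CFC.sqrt_mul_sqrt_self M h.nonneg

open scoped MatrixOrder in
lemma Matrix.PosSemidef.eq_sqrt_of_sq_eq {d : ℕ} {A : Matrix (Fin d) (Fin d) ℝ}
    (hA : A.PosSemidef) {B : Matrix (Fin d) (Fin d) ℝ} (hB : B.PosSemidef) (hAB : A ^ 2 = B) :
    A = hB.sqrt := by
  rw [hB.sqrt_eq_cfcSqrt]
  exact (CFC.sqrt_unique (by rw [← sq]; exact hAB) hA.nonneg).symm

/-- Optimal transport map `T_{A→B} = A^{-1/2} (A^{1/2} B A^{1/2})^{1/2} A^{-1/2}`. -/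
noncomputable def Tmap {d : ℕ} (A B : Matrix (Fin d) (Fin d) ℝ) : Matrix (Fin d) (Fin d) ℝ :=
  (msqrt A)⁻¹ * msqrt (msqrt A * B * msqrt A) * (msqrt A)⁻¹

/-- Squared Bures–Wasserstein distance `tr(A + B - 2 (A^{1/2} B A^{1/2})^{1/2})`. -/
noncomputable def W2sq {d : ℕ} (A B : Matrix (Fin d) (Fin d) ℝ) : ℝ :=
  (A + B - (2 : ℝ) • msqrt (msqrt A * B * msqrt A)).trace

/-- Bures–Wasserstein distance. -/
noncomputable def W2 {d : ℕ} (A B : Matrix (Fin d) (Fin d) ℝ) : ℝ :=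
  Real.sqrt (W2sq A B)

/-- Smallest eigenvalue of a (hermitian) matrix. -/
noncomputable def lamMin {d : ℕ} (M : Matrix (Fin d) (Fin d) ℝ) : ℝ :=
  if h : M.IsHermitian then ⨅ i, h.eigenvalues i else 0

/-- Largest eigenvalue of a (hermitian) matrix. -/
noncomputable def lamMax {d : ℕ} (M : Matrix (Fin d) (Fin d) ℝ) : ℝ :=
  if h : M.IsHermitian then ⨆ i, h.eigenvalues i else 0

/-- `Kset a b` : symmetric positive definite matrices with all eigenvalues in `[a, b]`,
expressed via the Loewner order `a • I ⪯ S ⪯ b • I`. -/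
def Kset {d : ℕ} (a b : ℝ) : Set (Matrix (Fin d) (Fin d) ℝ) :=
  {S | S.PosDef ∧ (S - a • (1 : Matrix (Fin d) (Fin d) ℝ)).PosSemidef ∧
    (b • (1 : Matrix (Fin d) (Fin d) ℝ) - S).PosSemidef}

/-- Barycenter functional `F(S) = (1/(2N)) ∑ᵢ W₂²(S, Σᵢ)`. -/
noncomputable def Fbar {d N : ℕ} (Ss : Fin N → Matrix (Fin d) (Fin d) ℝ)
    (S : Matrix (Fin d) (Fin d) ℝ) : ℝ :=
  (1 / (2 * (N : ℝ))) * ∑ i, W2sq S (Ss i)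

/-- Bures–Wasserstein gradient of the barycenter functional: `I - (1/N) ∑ᵢ T_{S→Σᵢ}`. -/
noncomputable def gradF {d N : ℕ} (Ss : Fin N → Matrix (Fin d) (Fin d) ℝ)
    (S : Matrix (Fin d) (Fin d) ℝ) : Matrix (Fin d) (Fin d) ℝ :=
  1 - (N : ℝ)⁻¹ • ∑ i, Tmap S (Ss i)

/-- `‖A‖_S² = tr(A S A)`. -/
noncomputable def normAtSq {d : ℕ} (A S : Matrix (Fin d) (Fin d) ℝ) : ℝ :=
  (A * S * A).trace

/-- Eigenvalue clipping: if `M = ∑ λᵢ uᵢ uᵢᵀ` then `clipOp b M = ∑ min(λᵢ, b) uᵢ uᵢᵀ`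
(junk value `0` for non-hermitian `M`). -/
noncomputable def clipOp {d : ℕ} (b : ℝ) (M : Matrix (Fin d) (Fin d) ℝ) :
    Matrix (Fin d) (Fin d) ℝ :=
  if h : M.IsHermitian then
    (h.eigenvectorUnitary : Matrix (Fin d) (Fin d) ℝ) *
      Matrix.diagonal (fun i => min (h.eigenvalues i) b) *
      (star h.eigenvectorUnitary : Matrix (Fin d) (Fin d) ℝ)
  else 0

namespace BW
variable {d : ℕ}
abbrev Mat (d : ℕ) := Matrix (Fin d) (Fin d) ℝ

def Orth (U : Mat d) : Prop := Uᵀ * U = 1 ∧ U * Uᵀ = 1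

lemma Orth.transpose {U : Mat d} (h : Orth U) : Orth Uᵀ := by
  refine ⟨?_, ?_⟩ <;> simp [Matrix.transpose_transpose, h.1, h.2]

lemma Orth.mul {U V : Mat d} (hU : Orth U) (hV : Orth V) : Orth (U * V) := by
  constructor
  · calc (U*V)ᵀ * (U*V) = Vᵀ * (Uᵀ * U) * V := by
          simp [Matrix.transpose_mul, Matrix.mul_assoc]
    _ = 1 := by rw [hU.1]; simp [hV.1]
  · calc (U*V) * (U*V)ᵀ = U * (V * Vᵀ) * Uᵀ := by
          simp [Matrix.transpose_mul, Matrix.mul_assoc]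
    _ = 1 := by rw [hV.2]; simp [hU.2]

lemma Orth.row_sum_sq {U : Mat d} (h : Orth U) (i : Fin d) : ∑ j, U i j ^ 2 = 1 := by
  have := congrFun (congrFun h.2 i) i
  simpa [Matrix.mul_apply, Matrix.one_apply, pow_two] using this

lemma Orth.col_sum_sq {U : Mat d} (h : Orth U) (j : Fin d) : ∑ i, U i j ^ 2 = 1 := by
  have := congrFun (congrFun h.1 j) j
  simpa [Matrix.mul_apply, Matrix.one_apply, pow_two] using this

lemma Orth.entry_le_one {U : Mat d} (h : Orth U) (i j : Fin d) : U i j ≤ 1 := by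
  have h1 : U i j ^ 2 ≤ 1 := by
    have := h.col_sum_sq j
    have h2 : U i j ^ 2 ≤ ∑ k, U k j ^ 2 :=
      Finset.single_le_sum (f := fun k => U k j ^ 2) (fun k _ => sq_nonneg _) (Finset.mem_univ i)
    linarith
  nlinarith

/-- Spectral theorem, real version. -/
lemma spectral {M : Mat d} (h : M.IsHermitian) :
    M = (h.eigenvectorUnitary : Mat d) * diagonal h.eigenvalues
      * (h.eigenvectorUnitary : Mat d)ᵀ := by
  have := h.spectral_theorem
  simpa [Matrix.star_eq_conjTranspose, Matrix.conjTranspose_eq_transpose_of_trivial,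
    Function.comp] using this

lemma orth_eigenvectorUnitary {M : Mat d} (h : M.IsHermitian) :
    Orth ((h.eigenvectorUnitary : Mat d)) := by
  have h1 := (Matrix.mem_unitaryGroup_iff').mp h.eigenvectorUnitary.2
  have h2 := (Matrix.mem_unitaryGroup_iff).mp h.eigenvectorUnitary.2
  constructor
  · simpa [Matrix.star_eq_conjTranspose, Matrix.conjTranspose_eq_transpose_of_trivial] using h1
  · simpa [Matrix.star_eq_conjTranspose, Matrix.conjTranspose_eq_transpose_of_trivial] using h2

variable {U : Mat d}


lemma conj_mul_conj (hU : Orth U) (f g : Fin d → ℝ) :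
    (U * diagonal f * Uᵀ) * (U * diagonal g * Uᵀ) = U * diagonal (fun i => f i * g i) * Uᵀ := by
  calc (U * diagonal f * Uᵀ) * (U * diagonal g * Uᵀ)
      = U * diagonal f * (Uᵀ * U) * diagonal g * Uᵀ := by simp only [Matrix.mul_assoc]
    _ = U * (diagonal f * diagonal g) * Uᵀ := by rw [hU.1]; rw [Matrix.mul_one]; simp only [Matrix.mul_assoc]
    _ = _ := by rw [Matrix.diagonal_mul_diagonal]

lemma conj_transpose_eq (f : Fin d → ℝ) :
    (U * diagonal f * Uᵀ)ᵀ = U * diagonal f * Uᵀ := by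
  simp [Matrix.transpose_mul, Matrix.diagonal_transpose, Matrix.mul_assoc]

lemma trace_conj (hU : Orth U) (f : Fin d → ℝ) :
    (U * diagonal f * Uᵀ).trace = ∑ i, f i := by
  rw [Matrix.trace_mul_comm, ← Matrix.mul_assoc, hU.1, Matrix.one_mul, Matrix.trace_diagonal]

lemma conj_posSemidef (hU : Orth U) {f : Fin d → ℝ} (hf : ∀ i, 0 ≤ f i) :
    (U * diagonal f * Uᵀ).PosSemidef := by
  have hd : (diagonal f).PosSemidef := Matrix.posSemidef_diagonal_iff.mpr hf
  have := hd.mul_mul_conjTranspose_same U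
  simpa [Matrix.conjTranspose_eq_transpose_of_trivial, Matrix.mul_assoc] using this

lemma trace_mul_diag (C : Mat d) (f : Fin d → ℝ) :
    (C * diagonal f).trace = ∑ i, C i i * f i := by
  simp [Matrix.trace, Matrix.diag, Matrix.mul_diagonal]

lemma trace_orth_mul_psd_le {Q R : Mat d} (hQ : Orth Q) (hR : R.PosSemidef)
    (hU' : Orth U) {f : Fin d → ℝ} (hf : ∀ i, 0 ≤ f i)
    (hRspec : R = U * diagonal f * Uᵀ) :
    (Q * R).trace ≤ R.trace := by
  have h1 : (Q * R).trace = ((Uᵀ * Q * U) * diagonal f).trace := by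
    rw [hRspec]
    rw [show Q * (U * diagonal f * Uᵀ) = (Q * U * diagonal f) * Uᵀ by
      simp only [Matrix.mul_assoc]]
    rw [Matrix.trace_mul_comm, ← Matrix.mul_assoc, ← Matrix.mul_assoc]
  rw [h1, hRspec, trace_conj hU', trace_mul_diag]
  apply Finset.sum_le_sum
  intro i _
  have hC : Orth (Uᵀ * Q * U) := ((hU'.transpose).mul hQ).mul hU'
  have := hC.entry_le_one i i
  nlinarith [hf i, hC.entry_le_one i i]


lemma orth_eigenvectorUnitary' {M : Mat d} (h : M.IsHermitian) :
    Orth ((h.eigenvectorUnitary : Mat d)) := orth_eigenvectorUnitary h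

lemma exists_polar (M : Mat d) (h : (Mᵀ * M).PosSemidef) :
    ∃ O : Mat d, Orth O ∧ M = O * h.sqrt := by
  have hR : h.sqrt.PosSemidef := h.posSemidef_sqrt
  have hRH : h.sqrt.IsHermitian := hR.isHermitian
  set V : Mat d := (hRH.eigenvectorUnitary : Mat d) with hVdef
  set D : Fin d → ℝ := hRH.eigenvalues with hDdef
  have hV : Orth V := orth_eigenvectorUnitary hRH
  have hD : ∀ i, 0 ≤ D i := fun i => hR.eigenvalues_nonneg i
  have hRspec : h.sqrt = V * diagonal D * Vᵀ := spectral hRH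
  have hR2 : h.sqrt * h.sqrt = Mᵀ * M := h.sqrt_mul_self
  set A : Mat d := M * V with hAdef
  have hAA : Aᵀ * A = diagonal (fun i => D i * D i) := by
    have h1 : Aᵀ * A = Vᵀ * (h.sqrt * h.sqrt) * V := by
      rw [hR2, hAdef, Matrix.transpose_mul]
      simp only [Matrix.mul_assoc]
    rw [h1, hRspec, conj_mul_conj hV]
    calc Vᵀ * (V * diagonal (fun i => D i * D i) * Vᵀ) * V
        = (Vᵀ * V) * diagonal (fun i => D i * D i) * (Vᵀ * V) := by
          simp only [Matrix.mul_assoc]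
      _ = diagonal (fun i => D i * D i) := by rw [hV.1]; simp
  have hcol : ∀ i j, ∑ k, A k i * A k j = if i = j then D i * D i else 0 := by
    intro i j
    have := congrFun (congrFun hAA i) j
    simpa [Matrix.mul_apply, Matrix.transpose_apply, Matrix.diagonal_apply] using this
  have hzero : ∀ i, D i = 0 → ∀ k, A k i = 0 := by
    intro i hDi k
    have hsum : ∑ k, A k i * A k i = 0 := by rw [hcol i i]; simp [hDi]
    have h0 : ∀ k ∈ Finset.univ, (0:ℝ) ≤ A k i * A k i := fun k _ => mul_self_nonneg _
    have := (Finset.sum_eq_zero_iff_of_nonneg h0).mp hsum k (Finset.mem_univ k)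
    nlinarith [this]
  set v : Fin d → EuclideanSpace ℝ (Fin d) :=
    fun i => (WithLp.equiv 2 (Fin d → ℝ)).symm (fun k => (D i)⁻¹ * A k i) with hvdef
  set s : Set (Fin d) := {i | D i ≠ 0} with hsdef
  have hv : Orthonormal ℝ (s.restrict v) := by
    rw [orthonormal_iff_ite]
    intro i j
    have hinner : (inner ℝ (s.restrict v i) (s.restrict v j) : ℝ)
        = ∑ k, ((D i.1)⁻¹ * A k i.1) * ((D j.1)⁻¹ * A k j.1) := by
      simp [PiLp.inner_apply, hvdef, Set.restrict_apply]
      exact Finset.sum_congr rfl fun _ _ => mul_comm _ _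
    rw [hinner]
    have : ∑ k, ((D i.1)⁻¹ * A k i.1) * ((D j.1)⁻¹ * A k j.1)
        = (D i.1)⁻¹ * (D j.1)⁻¹ * ∑ k, A k i.1 * A k j.1 := by
      rw [Finset.mul_sum]; apply Finset.sum_congr rfl; intro k _; ring
    rw [this, hcol]
    by_cases hij : i = j
    · subst hij
      simp only [if_pos rfl]
      have hi : D i.1 ≠ 0 := i.2
      field_simp
      simp
    · have hij' : i.1 ≠ j.1 := fun hc => hij (Subtype.ext hc)
      rw [if_neg hij', if_neg hij]
      ring
  have hcard : Module.finrank ℝ (EuclideanSpace ℝ (Fin d)) = Fintype.card (Fin d) := by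
    simp [finrank_euclideanSpace_fin]
  obtain ⟨b0, hb0⟩ := hv.exists_orthonormalBasis_extension_of_card_eq hcard
  set B : Mat d := Matrix.of (fun k i => (WithLp.equiv 2 (Fin d → ℝ)) (b0 i) k) with hBdef
  have hBcol : ∀ i j, ∑ k, B k i * B k j = if i = j then 1 else 0 := by
    intro i j
    have hON := orthonormal_iff_ite.mp b0.orthonormal i j
    have hinner : (inner ℝ (b0 i) (b0 j) : ℝ) = ∑ k, B k i * B k j := by
      simp [PiLp.inner_apply, hBdef]
      exact Finset.sum_congr rfl fun _ _ => mul_comm _ _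
    rw [← hinner, hON]
  have hBB : Bᵀ * B = 1 := by
    ext i j
    simp only [Matrix.mul_apply, Matrix.transpose_apply, Matrix.one_apply]
    rw [hBcol i j]
  have hBBt : B * Bᵀ = 1 := mul_eq_one_comm.mp hBB
  have hOrthB : Orth B := ⟨hBB, hBBt⟩
  have hBD : B * diagonal D = A := by
    ext k i
    rw [Matrix.mul_diagonal]
    by_cases hDi : D i = 0
    · rw [hDi, mul_zero, hzero i hDi k]
    · have hi : i ∈ s := hDi
      have := hb0 i hi
      have hBk : B k i = (D i)⁻¹ * A k i := by
        rw [hBdef]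
        simp only [Matrix.of_apply, this, hvdef, Equiv.apply_symm_apply]
      rw [hBk]
      field_simp
  refine ⟨B * Vᵀ, hOrthB.mul hV.transpose, ?_⟩
  calc M = A * Vᵀ := by rw [hAdef, Matrix.mul_assoc, hV.2, Matrix.mul_one]
    _ = B * diagonal D * Vᵀ := by rw [hBD]
    _ = (B * Vᵀ) * h.sqrt := by
        rw [hRspec]
        calc B * diagonal D * Vᵀ
            = B * (Vᵀ * V) * diagonal D * Vᵀ := by rw [hV.1]; simp
          _ = (B * Vᵀ) * (V * diagonal D * Vᵀ) := by simp only [Matrix.mul_assoc]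

lemma trace_orth_mul_psd_le' {Q R : Mat d} (hQ : Orth Q) (hR : R.PosSemidef) :
    (Q * R).trace ≤ R.trace :=
  trace_orth_mul_psd_le hQ hR (orth_eigenvectorUnitary hR.isHermitian)
    (fun i => hR.eigenvalues_nonneg i) (spectral hR.isHermitian)

lemma trace_mul_le_trace_sqrt (M : Mat d) (h : (Mᵀ * M).PosSemidef)
    {W : Mat d} (hW : Orth W) : (W * M).trace ≤ h.sqrt.trace := by
  obtain ⟨O, hO, hM⟩ := exists_polar M h
  conv_lhs => rw [hM, ← Matrix.mul_assoc]
  exact trace_orth_mul_psd_le' (hW.mul hO) h.posSemidef_sqrt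

lemma exists_trace_eq_sqrt (M : Mat d) (h : (Mᵀ * M).PosSemidef) :
    ∃ W : Mat d, Orth W ∧ (W * M).trace = h.sqrt.trace := by
  obtain ⟨O, hO, hM⟩ := exists_polar M h
  refine ⟨Oᵀ, hO.transpose, ?_⟩
  conv_lhs => rw [hM, ← Matrix.mul_assoc, hO.1, Matrix.one_mul]

lemma psd_transpose_mul_self (M : Mat d) : (Mᵀ * M).PosSemidef := by
  have := Matrix.posSemidef_conjTranspose_mul_self M
  simpa [Matrix.conjTranspose_eq_transpose_of_trivial] using this

lemma triple_entry (C Hm : Mat d) (g : Fin d → ℝ) (i : Fin d) :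
    (C * diagonal g * Hm) i i = ∑ j, C i j * g j * Hm j i := by
  rw [Matrix.mul_apply]
  apply Finset.sum_congr rfl
  intro j _
  rw [Matrix.mul_diagonal]

lemma trace_triple {U V : Mat d} (hU : Orth U) (hV : Orth V) (W : Mat d) (f g : Fin d → ℝ) :
    (W * (V * diagonal g * Vᵀ) * (U * diagonal f * Uᵀ)).trace
      = ∑ i, ∑ j, (Uᵀ * W * V) i j * g j * (Vᵀ * U) j i * f i := by
  have h1 : W * (V * diagonal g * Vᵀ) * (U * diagonal f * Uᵀ)
      = (W * (V * diagonal g * Vᵀ) * U * diagonal f) * Uᵀ := by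
    simp only [Matrix.mul_assoc]
  rw [h1, Matrix.trace_mul_comm]
  have h2 : Uᵀ * (W * (V * diagonal g * Vᵀ) * U * diagonal f)
      = ((Uᵀ * W * V) * diagonal g * (Vᵀ * U)) * diagonal f := by
    simp only [Matrix.mul_assoc]
  rw [h2, trace_mul_diag]
  apply Finset.sum_congr rfl
  intro i _
  rw [triple_entry, Finset.sum_mul]

lemma min_sq_le_sq (p q c : ℝ) : (min p c - min q c)^2 ≤ (p - q)^2 := by
  rcases le_total p c with h | h <;> rcases le_total q c with h' | h' <;>
    simp [min_eq_left, min_eq_right, h, h'] <;> nlinarith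

lemma core_sum {G H : Mat d} (hG : Orth G) (hH : Orth H)
    {p q : Fin d → ℝ} (hp : ∀ i, 0 ≤ p i) (hq : ∀ j, 0 ≤ q j) {c : ℝ} (hc : 0 ≤ c) :
    (∑ i, ∑ j, G i j * q j * H j i * p i) - (∑ i, ∑ j, G i j * min (q j) c * H j i * min (p i) c)
      ≤ ((∑ i, (p i * p i - min (p i) c * min (p i) c))
          + ∑ j, (q j * q j - min (q j) c * min (q j) c)) / 2 := by
  set a : Fin d → ℝ := fun i => p i * p i - min (p i) c * min (p i) c with ha
  set bb : Fin d → ℝ := fun j => q j * q j - min (q j) c * min (q j) c with hbb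
  have key : ∀ i j, G i j * q j * H j i * p i - G i j * min (q j) c * H j i * min (p i) c
      ≤ (G i j ^ 2 * (a i + bb j) + H j i ^ 2 * (a i + bb j)) / 4 := by
    intro i j
    have h1 : 0 ≤ p i * q j - min (p i) c * min (q j) c := by
      have := mul_le_mul (min_le_left (p i) c) (min_le_left (q j) c)
        (le_min (hq j) hc) (hp i)
      linarith
    have h2 : 2 * (p i * q j - min (p i) c * min (q j) c) ≤ a i + bb j := by
      have := min_sq_le_sq (p i) (q j) c
      simp only [ha, hbb]
      nlinarith [this]
    have e : G i j * q j * H j i * p i - G i j * min (q j) c * H j i * min (p i) c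
        = (G i j * H j i) * (p i * q j - min (p i) c * min (q j) c) := by ring
    rw [e]
    calc (G i j * H j i) * (p i * q j - min (p i) c * min (q j) c)
        ≤ ((G i j ^ 2 + H j i ^ 2) / 2) * (p i * q j - min (p i) c * min (q j) c) := by
          apply mul_le_mul_of_nonneg_right _ h1
          nlinarith [sq_nonneg (G i j - H j i)]
      _ ≤ ((G i j ^ 2 + H j i ^ 2) / 2) * ((a i + bb j) / 2) := by
          apply mul_le_mul_of_nonneg_left _ (by positivity)
          have h2' := h2
          simp only [ha, hbb] at h2' ⊢
          linarith
      _ = (G i j ^ 2 * (a i + bb j) + H j i ^ 2 * (a i + bb j)) / 4 := by ring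
  have step1 : (∑ i, ∑ j, (G i j * q j * H j i * p i - G i j * min (q j) c * H j i * min (p i) c))
      ≤ ∑ i, ∑ j, (G i j ^ 2 * (a i + bb j) + H j i ^ 2 * (a i + bb j)) / 4 :=
    Finset.sum_le_sum fun i _ => Finset.sum_le_sum fun j _ => key i j
  have hsplit : ∑ i, ∑ j, (G i j ^ 2 * (a i + bb j) + H j i ^ 2 * (a i + bb j)) / 4
      = ((∑ i, a i) + ∑ j, bb j) / 2 := by
    have expand : ∀ i j, (G i j ^ 2 * (a i + bb j) + H j i ^ 2 * (a i + bb j)) / 4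
        = G i j ^ 2 * (a i / 4) + G i j ^ 2 * (bb j / 4)
          + (H j i ^ 2 * (a i / 4) + H j i ^ 2 * (bb j / 4)) := by
      intro i j; ring
    simp only [expand, Finset.sum_add_distrib]
    have e1 : ∑ i, ∑ j, G i j ^ 2 * (a i / 4) = ∑ i, a i / 4 := by
      apply Finset.sum_congr rfl; intro i _
      rw [← Finset.sum_mul, hG.row_sum_sq, one_mul]
    have e2 : ∑ i, ∑ j, G i j ^ 2 * (bb j / 4) = ∑ j, bb j / 4 := by
      rw [Finset.sum_comm]
      apply Finset.sum_congr rfl; intro j _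
      rw [← Finset.sum_mul, hG.col_sum_sq, one_mul]
    have e3 : ∑ i, ∑ j, H j i ^ 2 * (a i / 4) = ∑ i, a i / 4 := by
      apply Finset.sum_congr rfl; intro i _
      rw [← Finset.sum_mul, hH.col_sum_sq, one_mul]
    have e4 : ∑ i, ∑ j, H j i ^ 2 * (bb j / 4) = ∑ j, bb j / 4 := by
      rw [Finset.sum_comm]
      apply Finset.sum_congr rfl; intro j _
      rw [← Finset.sum_mul, hH.row_sum_sq, one_mul]
    rw [e1, e2, e3, e4, ← Finset.sum_div, ← Finset.sum_div]
    ring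
  calc (∑ i, ∑ j, G i j * q j * H j i * p i)
        - (∑ i, ∑ j, G i j * min (q j) c * H j i * min (p i) c)
      = ∑ i, ∑ j, (G i j * q j * H j i * p i - G i j * min (q j) c * H j i * min (p i) c) := by
        rw [← Finset.sum_sub_distrib]
        apply Finset.sum_congr rfl; intro i _
        rw [← Finset.sum_sub_distrib]
    _ ≤ _ := step1.trans (le_of_eq hsplit)

lemma msqrt_eq {M : Mat d} (h : M.PosSemidef) : msqrt M = h.sqrt := dif_pos h

lemma clip_struct {X : Mat d} (hX : X.PosSemidef) {b : ℝ} (hb : 0 < b) :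
    ∃ (U : Mat d) (p : Fin d → ℝ), Orth U ∧ (∀ i, 0 ≤ p i) ∧
      X = U * diagonal (fun i => p i * p i) * Uᵀ ∧
      clipOp b X = U * diagonal (fun i => min (p i) (Real.sqrt b) * min (p i) (Real.sqrt b)) * Uᵀ ∧
      msqrt X = U * diagonal p * Uᵀ ∧
      msqrt (clipOp b X) = U * diagonal (fun i => min (p i) (Real.sqrt b)) * Uᵀ := by
  have hH := hX.isHermitian
  set U : Mat d := (hH.eigenvectorUnitary : Mat d) with hUdef
  set lam : Fin d → ℝ := hH.eigenvalues with hlamdef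
  have hU : Orth U := orth_eigenvectorUnitary hH
  have hlam : ∀ i, 0 ≤ lam i := fun i => hX.eigenvalues_nonneg i
  set p : Fin d → ℝ := fun i => Real.sqrt (lam i) with hpdef
  have hp : ∀ i, 0 ≤ p i := fun i => Real.sqrt_nonneg _
  have hpp : (fun i => p i * p i) = lam := by
    funext i; exact Real.mul_self_sqrt (hlam i)
  have hXeq : X = U * diagonal (fun i => p i * p i) * Uᵀ := by
    rw [hpp]; exact spectral hH
  have hclip : clipOp b X = U * diagonal (fun i => min (lam i) b) * Uᵀ := by
    rw [clipOp, dif_pos hH]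
    simp [Matrix.star_eq_conjTranspose, Matrix.conjTranspose_eq_transpose_of_trivial, hUdef, hlamdef]
  have hminp : (fun i => min (p i) (Real.sqrt b) * min (p i) (Real.sqrt b))
      = fun i => min (lam i) b := by
    funext i
    have h1 : min (p i) (Real.sqrt b) = Real.sqrt (min (lam i) b) := by
      rcases le_total (lam i) b with h | h
      · rw [min_eq_left h, hpdef]
        exact min_eq_left (Real.sqrt_le_sqrt h)
      · rw [min_eq_right h, hpdef]
        exact min_eq_right (Real.sqrt_le_sqrt h)
    rw [h1, Real.mul_self_sqrt (le_min (hlam i) hb.le)]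
  have hclip' : clipOp b X
      = U * diagonal (fun i => min (p i) (Real.sqrt b) * min (p i) (Real.sqrt b)) * Uᵀ := by
    rw [hminp]; exact hclip
  have hPSDp : (U * diagonal p * Uᵀ).PosSemidef := conj_posSemidef hU hp
  have hsqX : msqrt X = U * diagonal p * Uᵀ := by
    rw [msqrt_eq hX]
    exact (hPSDp.eq_sqrt_of_sq_eq hX (by rw [pow_two, conj_mul_conj hU]; exact hXeq.symm)).symm
  have hclipPSD : (clipOp b X).PosSemidef := by
    rw [hclip]
    exact conj_posSemidef hU (fun i => le_min (hlam i) hb.le)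
  have hPSDp' : (U * diagonal (fun i => min (p i) (Real.sqrt b)) * Uᵀ).PosSemidef :=
    conj_posSemidef hU (fun i => le_min (hp i) (Real.sqrt_nonneg b))
  have hsqclip : msqrt (clipOp b X) = U * diagonal (fun i => min (p i) (Real.sqrt b)) * Uᵀ := by
    rw [msqrt_eq hclipPSD]
    exact (hPSDp'.eq_sqrt_of_sq_eq hclipPSD
      (by rw [pow_two, conj_mul_conj hU]; exact hclip'.symm)).symm
  exact ⟨U, p, hU, hp, hXeq, hclip', hsqX, hsqclip⟩

lemma W2sq_eq (A B : Mat d) :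
    W2sq A B = A.trace + B.trace - 2 * (msqrt (msqrt A * B * msqrt A)).trace := by
  rw [W2sq, Matrix.trace_sub, Matrix.trace_add, Matrix.trace_smul]
  simp [smul_eq_mul]

end BW



/-- Eigenvalue clipping is a contraction in the Bures–Wasserstein metric. -/
theorem clip_is_BW_contraction {d : ℕ} (b : ℝ) (hb : 0 < b)
    (X Y : Matrix (Fin d) (Fin d) ℝ) (hX : X.PosSemidef) (hY : Y.PosSemidef) :
    W2 (clipOp b X) (clipOp b Y) ≤ W2 X Y := by
  open BW in
  rw [W2, W2]
  apply Real.sqrt_le_sqrt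
  obtain ⟨U, p, hU, hp, hXeq, hcX, hsX, hscX⟩ := BW.clip_struct hX hb
  obtain ⟨V, q, hV, hq, hYeq, hcY, hsY, hscY⟩ := BW.clip_struct hY hb
  set c := Real.sqrt b with hcdef
  -- traces
  have htrX : X.trace = ∑ i, p i * p i := by rw [hXeq, BW.trace_conj hU]
  have htrY : Y.trace = ∑ j, q j * q j := by rw [hYeq, BW.trace_conj hV]
  have htrcX : (clipOp b X).trace = ∑ i, min (p i) c * min (p i) c := by
    rw [hcX, BW.trace_conj hU]
  have htrcY : (clipOp b Y).trace = ∑ j, min (q j) c * min (q j) c := by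
    rw [hcY, BW.trace_conj hV]
  -- transposes and squares of msqrt
  have hQQ : msqrt Y * msqrt Y = Y := by rw [hsY, BW.conj_mul_conj hV, ← hYeq]
  have hQQ' : msqrt (clipOp b Y) * msqrt (clipOp b Y) = clipOp b Y := by
    rw [hscY, BW.conj_mul_conj hV, ← hcY]
  have hPt : (msqrt X)ᵀ = msqrt X := by rw [hsX]; exact BW.conj_transpose_eq _
  have hQt : (msqrt Y)ᵀ = msqrt Y := by rw [hsY]; exact BW.conj_transpose_eq _
  have hPt' : (msqrt (clipOp b X))ᵀ = msqrt (clipOp b X) := by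
    rw [hscX]; exact BW.conj_transpose_eq _
  have hQt' : (msqrt (clipOp b Y))ᵀ = msqrt (clipOp b Y) := by
    rw [hscY]; exact BW.conj_transpose_eq _
  have hMM : (msqrt Y * msqrt X)ᵀ * (msqrt Y * msqrt X) = msqrt X * Y * msqrt X := by
    rw [Matrix.transpose_mul, hPt, hQt]
    calc msqrt X * msqrt Y * (msqrt Y * msqrt X)
        = msqrt X * (msqrt Y * msqrt Y) * msqrt X := by simp only [Matrix.mul_assoc]
      _ = msqrt X * Y * msqrt X := by rw [hQQ]
  have hMM' : (msqrt (clipOp b Y) * msqrt (clipOp b X))ᵀ * (msqrt (clipOp b Y) * msqrt (clipOp b X))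
      = msqrt (clipOp b X) * clipOp b Y * msqrt (clipOp b X) := by
    rw [Matrix.transpose_mul, hPt', hQt']
    calc msqrt (clipOp b X) * msqrt (clipOp b Y) * (msqrt (clipOp b Y) * msqrt (clipOp b X))
        = msqrt (clipOp b X) * (msqrt (clipOp b Y) * msqrt (clipOp b Y)) * msqrt (clipOp b X) := by
          simp only [Matrix.mul_assoc]
      _ = _ := by rw [hQQ']
  have hMMpsd := BW.psd_transpose_mul_self (msqrt Y * msqrt X)
  have hMMpsd' := BW.psd_transpose_mul_self (msqrt (clipOp b Y) * msqrt (clipOp b X))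
  obtain ⟨W0, hW0, hW0eq⟩ := BW.exists_trace_eq_sqrt (msqrt Y * msqrt X) hMMpsd
  have hτ : (msqrt (msqrt X * Y * msqrt X)).trace = (W0 * (msqrt Y * msqrt X)).trace := by
    rw [← hMM, BW.msqrt_eq hMMpsd, hW0eq]
  have hτ' : (W0 * (msqrt (clipOp b Y) * msqrt (clipOp b X))).trace
      ≤ (msqrt (msqrt (clipOp b X) * clipOp b Y * msqrt (clipOp b X))).trace := by
    rw [← hMM', BW.msqrt_eq hMMpsd']
    exact BW.trace_mul_le_trace_sqrt _ _ hW0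
  -- expand traces as double sums
  have hbig : (W0 * (msqrt Y * msqrt X)).trace
      = ∑ i, ∑ j, (Uᵀ * W0 * V) i j * q j * (Vᵀ * U) j i * p i := by
    rw [hsY, hsX, ← Matrix.mul_assoc]
    exact BW.trace_triple hU hV W0 p q
  have hbig' : (W0 * (msqrt (clipOp b Y) * msqrt (clipOp b X))).trace
      = ∑ i, ∑ j, (Uᵀ * W0 * V) i j * min (q j) c * (Vᵀ * U) j i * min (p i) c := by
    rw [hscY, hscX, ← Matrix.mul_assoc]
    exact BW.trace_triple hU hV W0 _ _
  have hG : BW.Orth (Uᵀ * W0 * V) := ((hU.transpose).mul hW0).mul hV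
  have hH : BW.Orth (Vᵀ * U) := (hV.transpose).mul hU
  have hcore := BW.core_sum hG hH hp hq (Real.sqrt_nonneg b)
  rw [hbig'] at hτ'
  simp only [← hcdef] at hcore
  rw [Finset.sum_sub_distrib, Finset.sum_sub_distrib] at hcore
  rw [BW.W2sq_eq, BW.W2sq_eq, htrX, htrY, htrcX, htrcY, hτ]
  linarith
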